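/- Let S be a finite set of points in the plane, not all on one line, and let s_i, s_j be distinct points of S such that the segment s_i s_j is not an edge of the convex hull of S but both are on the convex hull and their furthest-site Voronoi regions share a boundary point. Then the set of radii of circles through s_i and s_j enclosing S is bounded above, and the largest such circle passes through a third point s_k of S. -/

import Mathlib

open Metric RealInnerProductSpace

noncomputable section LECAux

lemma lec_dist_sq (x y : EuclideanSpace ℝ (Fin 2)) :
    dist x y ^ 2 = (x 0 - y 0)^2 + (x 1 - y 1)^2 := by
  rw [EuclideanSpace.dist_eq, Real.sq_sqrt (by positivity)]
  simp [Fin.sum_univ_two, Real.dist_eq, sq_abs]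

lemma lec_sq_le_sq {a b : ℝ} (ha : 0 ≤ a) (hb : 0 ≤ b) : a ≤ b ↔ a^2 ≤ b^2 := by
  constructor <;> intro h <;> nlinarith

lemma lec_sq_eq_sq {a b : ℝ} (ha : 0 ≤ a) (hb : 0 ≤ b) : a = b ↔ a^2 = b^2 := by
  constructor <;> intro h <;> nlinarith

def ZZ (m0 m1 p q t : ℝ) : EuclideanSpace ℝ (Fin 2) :=
  WithLp.toLp 2 (fun i : Fin 2 => if i = 0 then m0 + t*p else m1 + t*q)

lemma ZZ0 (m0 m1 p q t : ℝ) : ZZ m0 m1 p q t 0 = m0 + t*p := by simp [ZZ]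
lemma ZZ1 (m0 m1 p q t : ℝ) : ZZ m0 m1 p q t 1 = m1 + t*q := by simp [ZZ]

lemma lec_f_exists (v : EuclideanSpace ℝ (Fin 2)) (hv : v ≠ 0) :
    ∃ f : EuclideanSpace ℝ (Fin 2) →L[ℝ] ℝ, f ≠ 0 ∧ ∀ w, f w = v 0 * w 0 + v 1 * w 1 := by
  refine ⟨innerSL ℝ v, ?_, fun w => ?_⟩
  · intro h
    apply hv
    have h2 := DFunLike.congr_fun h v
    simp at h2
    exact h2
  · simp [PiLp.inner_apply, Fin.sum_univ_two, RCLike.inner_apply]; ring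

lemma lec_param (si sj z : EuclideanSpace ℝ (Fin 2)) (hij : si ≠ sj)
    (h : dist z si = dist z sj) :
    ∃ t : ℝ, z = ZZ ((si 0 + sj 0)/2) ((si 1 + sj 1)/2) (si 1 - sj 1) (sj 0 - si 0) t := by
  set p := si 1 - sj 1 with hp
  set q := sj 0 - si 0 with hq
  set m0 := (si 0 + sj 0)/2 with hm0
  set m1 := (si 1 + sj 1)/2 with hm1
  have hK : 0 < p^2 + q^2 := by
    have : si 0 ≠ sj 0 ∨ si 1 ≠ sj 1 := by
      by_contra hc
      push_neg at hc
      exact hij (PiLp.ext fun i => by fin_cases i <;> simp [hc.1, hc.2])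
    rcases this with h' | h'
    · have : q ≠ 0 := fun hq0 => h' (by rw [hq] at hq0; linarith)
      positivity
    · have : p ≠ 0 := fun hp0 => h' (by rw [hp] at hp0; linarith)
      positivity
  have hsq : dist z si ^ 2 = dist z sj ^ 2 := by rw [h]
  rw [lec_dist_sq, lec_dist_sq] at hsq
  have hrel : q * (z 0 - m0) = p * (z 1 - m1) := by
    rw [hp, hq, hm0, hm1]; nlinarith [hsq]
  refine ⟨((z 0 - m0)*p + (z 1 - m1)*q)/(p^2+q^2), ?_⟩
  apply PiLp.ext; intro i
  fin_cases i
  · show z 0 = m0 + (((z 0 - m0) * p + (z 1 - m1) * q) / (p ^ 2 + q ^ 2)) * p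
    field_simp
    linear_combination q * hrel
  · show z 1 = m1 + (((z 0 - m0) * p + (z 1 - m1) * q) / (p ^ 2 + q ^ 2)) * q
    field_simp
    linear_combination (-p) * hrel

end LECAux

set_option maxHeartbeats 2000000 in
theorem largest_enclosing_circle_through_third_point
    (S : Finset (EuclideanSpace ℝ (Fin 2)))
    (si sj : EuclideanSpace ℝ (Fin 2)) (hij : si ≠ sj)
    (hsi : si ∈ S) (hsj : sj ∈ S)
    (hnotline : ¬ Collinear ℝ (S : Set (EuclideanSpace ℝ (Fin 2))))
    -- `sᵢ sⱼ` is not a convex hull edge of `S`: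
    (hnotedge : ¬ ∃ (f : EuclideanSpace ℝ (Fin 2) →L[ℝ] ℝ) (a : ℝ), f ≠ 0 ∧
        f si = a ∧ f sj = a ∧ ∀ t ∈ S, f t ≤ a)
    -- `sᵢ`, `sⱼ` are vertices of the convex hull of `S`:
    (hvi : si ∉ convexHull ℝ ((S : Set (EuclideanSpace ℝ (Fin 2))) \ {si}))
    (hvj : sj ∉ convexHull ℝ ((S : Set (EuclideanSpace ℝ (Fin 2))) \ {sj}))
    -- their furthest-site Voronoi regions share a boundary point:
    (hshare : ∃ x : EuclideanSpace ℝ (Fin 2), dist x si = dist x sj ∧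
        ∀ t ∈ S, dist x t ≤ dist x si) :
    BddAbove {r : ℝ | ∃ z : EuclideanSpace ℝ (Fin 2),
        dist z si = r ∧ dist z sj = r ∧
        (S : Set (EuclideanSpace ℝ (Fin 2))) ⊆ closedBall z r} ∧
      ∃ r ∈ {r : ℝ | ∃ z : EuclideanSpace ℝ (Fin 2),
          dist z si = r ∧ dist z sj = r ∧
          (S : Set (EuclideanSpace ℝ (Fin 2))) ⊆ closedBall z r},
        (∀ r' ∈ {r : ℝ | ∃ z : EuclideanSpace ℝ (Fin 2),
            dist z si = r ∧ dist z sj = r ∧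
            (S : Set (EuclideanSpace ℝ (Fin 2))) ⊆ closedBall z r}, r' ≤ r) ∧
        ∀ z : EuclideanSpace ℝ (Fin 2),
          dist z si = r → dist z sj = r →
          (S : Set (EuclideanSpace ℝ (Fin 2))) ⊆ closedBall z r →
          ∃ sk ∈ S, sk ≠ si ∧ sk ≠ sj ∧ dist z sk = r := by
  classical
  set p := si 1 - sj 1 with hp
  set q := sj 0 - si 0 with hq
  set m0 := (si 0 + sj 0)/2 with hm0
  set m1 := (si 1 + sj 1)/2 with hm1
  have hK : 0 < p^2 + q^2 := by
    have : si 0 ≠ sj 0 ∨ si 1 ≠ sj 1 := by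
      by_contra hc
      push_neg at hc
      exact hij (PiLp.ext fun i => by fin_cases i <;> simp [hc.1, hc.2])
    rcases this with h' | h'
    · have : q ≠ 0 := fun hq0 => h' (by rw [hq] at hq0; linarith)
      positivity
    · have : p ≠ 0 := fun hp0 => h' (by rw [hp] at hp0; linarith)
      positivity
  set g : EuclideanSpace ℝ (Fin 2) → ℝ := fun s => p*(m0 - s 0) + q*(m1 - s 1) with hg
  set c : EuclideanSpace ℝ (Fin 2) → ℝ :=
    fun s => (p^2+q^2)/4 - (m0 - s 0)^2 - (m1 - s 1)^2 with hc
  set ρ : ℝ → ℝ := fun t => Real.sqrt ((p^2+q^2)*(1/4+t^2)) with hρ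
  have hρ_nonneg : ∀ t, 0 ≤ ρ t := fun t => Real.sqrt_nonneg _
  have hρ_sq : ∀ t, ρ t ^ 2 = (p^2+q^2)*(1/4+t^2) :=
    fun t => Real.sq_sqrt (by positivity)
  have hZd : ∀ (t : ℝ) (s : EuclideanSpace ℝ (Fin 2)),
      dist (ZZ m0 m1 p q t) s ^ 2
        = (m0 - s 0)^2 + (m1 - s 1)^2 + 2*t*(g s) + t^2*(p^2+q^2) := by
    intro t s
    rw [lec_dist_sq, ZZ0, ZZ1]
    simp only [hg]
    ring
  have hradiusi : ∀ t, dist (ZZ m0 m1 p q t) si = ρ t := by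
    intro t
    rw [lec_sq_eq_sq dist_nonneg (hρ_nonneg t), hZd, hρ_sq]
    simp only [hg, hp, hq, hm0, hm1]
    ring
  have hradiusj : ∀ t, dist (ZZ m0 m1 p q t) sj = ρ t := by
    intro t
    rw [lec_sq_eq_sq dist_nonneg (hρ_nonneg t), hZd, hρ_sq]
    simp only [hg, hp, hq, hm0, hm1]
    ring
  have hmem_iff : ∀ (t : ℝ) (s : EuclideanSpace ℝ (Fin 2)),
      dist (ZZ m0 m1 p q t) s ≤ ρ t ↔ 2*t*(g s) ≤ c s := by
    intro t s
    rw [lec_sq_le_sq dist_nonneg (hρ_nonneg t), hZd, hρ_sq]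
    simp only [hc]
    constructor <;> intro h <;> nlinarith
  have heq_iff : ∀ (t : ℝ) (s : EuclideanSpace ℝ (Fin 2)),
      dist (ZZ m0 m1 p q t) s = ρ t ↔ 2*t*(g s) = c s := by
    intro t s
    rw [lec_sq_eq_sq dist_nonneg (hρ_nonneg t), hZd, hρ_sq]
    simp only [hc]
    constructor <;> intro h <;> nlinarith
  have hgsi : g si = 0 := by simp only [hg, hp, hq, hm0, hm1]; ring
  have hgsj : g sj = 0 := by simp only [hg, hp, hq, hm0, hm1]; ring
  have hgsi' : p*(m0 - si 0) + q*(m1 - si 1) = 0 := hgsi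
  have hgsj' : p*(m0 - sj 0) + q*(m1 - sj 1) = 0 := hgsj
  have hbis : ∀ z, dist z si = dist z sj → ∃ t, z = ZZ m0 m1 p q t := by
    intro z hz
    obtain ⟨t, ht⟩ := lec_param si sj z hij hz
    exact ⟨t, ht⟩
  -- both signs of g occur on S
  have hsp : ∃ s ∈ S, 0 < g s := by
    by_contra hcon
    push_neg at hcon
    have hv : (WithLp.toLp 2 (fun i : Fin 2 => if i = 0 then -p else -q) : EuclideanSpace ℝ (Fin 2)) ≠ 0 := by
      intro h0
      have h00 := congrArg (fun v : EuclideanSpace ℝ (Fin 2) => v 0) h0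
      have h01 := congrArg (fun v : EuclideanSpace ℝ (Fin 2) => v 1) h0
      norm_num at h00 h01
      nlinarith
    obtain ⟨f, hf0, hfw⟩ := lec_f_exists _ hv
    exact hnotedge ⟨f, -(p*m0) - q*m1, hf0,
      by rw [hfw si]; norm_num; linarith [hgsi'],
      by rw [hfw sj]; norm_num; linarith [hgsj'],
      fun s hs => by
        rw [hfw s]; norm_num
        have := hcon s hs
        simp only [hg] at this
        linarith⟩
  have hsn : ∃ s ∈ S, g s < 0 := by
    by_contra hcon
    push_neg at hcon
    have hv : (WithLp.toLp 2 (fun i : Fin 2 => if i = 0 then p else q) : EuclideanSpace ℝ (Fin 2)) ≠ 0 := by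
      intro h0
      have h00 := congrArg (fun v : EuclideanSpace ℝ (Fin 2) => v 0) h0
      have h01 := congrArg (fun v : EuclideanSpace ℝ (Fin 2) => v 1) h0
      norm_num at h00 h01
      nlinarith
    obtain ⟨f, hf0, hfw⟩ := lec_f_exists _ hv
    exact hnotedge ⟨f, p*m0 + q*m1, hf0,
      by rw [hfw si]; norm_num; linarith [hgsi'],
      by rw [hfw sj]; norm_num; linarith [hgsj'],
      fun s hs => by
        rw [hfw s]; norm_num
        have := hcon s hs
        simp only [hg] at this
        linarith⟩
  obtain ⟨x, hx1, hx2⟩ := hshare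
  obtain ⟨t₀, hx⟩ := hbis x hx1
  have ht₀ : ∀ s ∈ S, 2*t₀*(g s) ≤ c s := by
    intro s hs
    apply (hmem_iff t₀ s).mp
    rw [← hx]
    calc dist x s = dist x s := rfl
      _ ≤ dist x si := hx2 s hs
      _ = ρ t₀ := by rw [hx]; exact hradiusi t₀
  obtain ⟨sp0, hsp0S, hsp0⟩ := hsp
  obtain ⟨sn0, hsn0S, hsn0⟩ := hsn
  set Sp := S.filter (fun s => 0 < g s) with hSpdef
  set Sn := S.filter (fun s => g s < 0) with hSndef
  have hSpne : Sp.Nonempty := ⟨sp0, Finset.mem_filter.mpr ⟨hsp0S, hsp0⟩⟩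
  have hSnne : Sn.Nonempty := ⟨sn0, Finset.mem_filter.mpr ⟨hsn0S, hsn0⟩⟩
  set B := Sp.inf' hSpne (fun s => c s / (2 * g s)) with hBdef
  set A := Sn.sup' hSnne (fun s => c s / (2 * g s)) with hAdef
  have hB : ∀ t : ℝ, (∀ s ∈ S, 2*t*(g s) ≤ c s) → t ≤ B := by
    intro t ht
    apply Finset.le_inf'
    intro s hsmem
    rw [Finset.mem_filter] at hsmem
    obtain ⟨hs1, hs2⟩ := hsmem
    rw [le_div_iff₀ (by linarith)]
    have h2 : t * (2 * g s) = 2*t*(g s) := by ring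
    linarith [ht s hs1]
  have hA : ∀ t : ℝ, (∀ s ∈ S, 2*t*(g s) ≤ c s) → A ≤ t := by
    intro t ht
    apply Finset.sup'_le
    intro s hsmem
    rw [Finset.mem_filter] at hsmem
    obtain ⟨hs1, hs2⟩ := hsmem
    rw [div_le_iff_of_neg (by linarith)]
    have h2 : t * (2 * g s) = 2*t*(g s) := by ring
    linarith [ht s hs1]
  have hT : ∀ t : ℝ, A ≤ t → t ≤ B → ∀ s ∈ S, 2*t*(g s) ≤ c s := by
    intro t h1 h2 s hs
    rcases lt_trichotomy (g s) 0 with hgs | hgs | hgs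
    · have hmem : s ∈ Sn := Finset.mem_filter.mpr ⟨hs, hgs⟩
      have h3 := Finset.le_sup' (fun s => c s / (2 * g s)) hmem
      have h4 : c s / (2 * g s) ≤ t := le_trans h3 h1
      rw [div_le_iff_of_neg (by linarith)] at h4
      nlinarith
    · have h0 := ht₀ s hs
      rw [hgs] at h0 ⊢
      linarith
    · have hmem : s ∈ Sp := Finset.mem_filter.mpr ⟨hs, hgs⟩
      have h3 := Finset.inf'_le (fun s => c s / (2 * g s)) hmem
      have h4 : t ≤ c s / (2 * g s) := le_trans h2 h3
      rw [le_div_iff₀ (by linarith)] at h4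
      nlinarith
  have hAB : A ≤ B := le_trans (hA t₀ ht₀) (hB t₀ ht₀)
  set t' := if A^2 ≤ B^2 then B else A with ht'def
  have ht'A : A ≤ t' := by rw [ht'def]; split_ifs; exacts [hAB, le_refl A]
  have ht'B : t' ≤ B := by rw [ht'def]; split_ifs; exacts [le_refl B, hAB]
  have hBt' : B^2 ≤ t'^2 := by
    rw [ht'def]; split_ifs with h
    · exact le_refl _
    · linarith
  have hAt' : A^2 ≤ t'^2 := by
    rw [ht'def]; split_ifs with h
    · exact h
    · exact le_refl _
  have ht'max : ∀ t : ℝ, A ≤ t → t ≤ B → t^2 ≤ t'^2 := by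
    intro t h1 h2
    rcases le_or_gt 0 t with h | h
    · nlinarith
    · nlinarith
  -- the maximum radius
  have hmemR : ∃ z : EuclideanSpace ℝ (Fin 2), dist z si = ρ t' ∧ dist z sj = ρ t' ∧
      (S : Set (EuclideanSpace ℝ (Fin 2))) ⊆ closedBall z (ρ t') := by
    refine ⟨ZZ m0 m1 p q t', hradiusi t', hradiusj t', fun s hs => ?_⟩
    rw [mem_closedBall, dist_comm]
    exact (hmem_iff t' s).mpr (hT t' ht'A ht'B s (Finset.mem_coe.mp hs))
  have hmax : ∀ r' : ℝ, (∃ z : EuclideanSpace ℝ (Fin 2), dist z si = r' ∧ dist z sj = r' ∧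
      (S : Set (EuclideanSpace ℝ (Fin 2))) ⊆ closedBall z r') → r' ≤ ρ t' := by
    rintro r' ⟨z, h1, h2, h3⟩
    obtain ⟨t, hz⟩ := hbis z (h1.trans h2.symm)
    have hr'eq : r' = ρ t := by rw [← h1, hz, hradiusi]
    have htc : ∀ s ∈ S, 2*t*(g s) ≤ c s := by
      intro s hs
      apply (hmem_iff t s).mp
      rw [← hz, ← hr'eq, dist_comm]
      exact h3 (Finset.mem_coe.mpr hs)
    have h5 := ht'max t (hA t htc) (hB t htc)
    rw [hr'eq, hρ]
    exact Real.sqrt_le_sqrt (by nlinarith)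
  refine ⟨⟨ρ t', fun r' hr' => hmax r' hr'⟩, ρ t', hmemR, fun r' hr' => hmax r' hr', ?_⟩
  -- every largest circle passes through a third point
  intro z h1 h2 h3
  obtain ⟨t, hz⟩ := hbis z (h1.trans h2.symm)
  have hρeq : ρ t = ρ t' := by rw [← hradiusi t, ← hz, h1]
  have ht2 : t^2 = t'^2 := by
    have h4 : (p^2+q^2)*(1/4+t^2) = (p^2+q^2)*(1/4+t'^2) := by
      rw [← hρ_sq t, ← hρ_sq t', hρeq]
    have h5 := mul_left_cancel₀ (ne_of_gt hK) h4
    linarith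
  have htc : ∀ s ∈ S, 2*t*(g s) ≤ c s := by
    intro s hs
    apply (hmem_iff t s).mp
    rw [← hz, dist_comm, hρeq]
    have := h3 (Finset.mem_coe.mpr hs)
    rw [mem_closedBall] at this
    exact this
  have hAt : A ≤ t := hA t htc
  have hBt : t ≤ B := hB t htc
  rcases le_or_gt 0 t with htpos | htneg
  · -- t = B, binding constraint from Sp
    have htB : t = B := by
      have hB0 : 0 ≤ B := le_trans htpos hBt
      have h5 : (B - t)*(B + t) = 0 := by nlinarith
      rcases mul_eq_zero.mp h5 with h6 | h6
      · linarith
      · linarith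
    obtain ⟨sk, hskmem, hskeq⟩ := Finset.exists_mem_eq_inf' hSpne (fun s => c s / (2 * g s))
    rw [Finset.mem_filter] at hskmem
    obtain ⟨hskS, hskg⟩ := hskmem
    have hteq : t = c sk / (2 * g sk) := by rw [htB, hBdef, hskeq]
    have htight : 2*t*(g sk) = c sk := by
      rw [hteq]
      field_simp
    refine ⟨sk, hskS, ?_, ?_, ?_⟩
    · intro h; rw [h, hgsi] at hskg; exact lt_irrefl 0 hskg
    · intro h; rw [h, hgsj] at hskg; exact lt_irrefl 0 hskg
    · rw [hz, ← hρeq]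
      exact (heq_iff t sk).mpr htight
  · -- t = A, binding constraint from Sn
    have htA : t = A := by
      have hA0 : A ≤ 0 := le_trans hAt (le_of_lt htneg)
      have h5 : (A - t)*(A + t) = 0 := by nlinarith
      rcases mul_eq_zero.mp h5 with h6 | h6
      · linarith
      · linarith
    obtain ⟨sk, hskmem, hskeq⟩ := Finset.exists_mem_eq_sup' hSnne (fun s => c s / (2 * g s))
    rw [Finset.mem_filter] at hskmem
    obtain ⟨hskS, hskg⟩ := hskmem
    have hteq : t = c sk / (2 * g sk) := by rw [htA, hAdef, hskeq]
    have htight : 2*t*(g sk) = c sk := by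
      rw [hteq]
      have : g sk ≠ 0 := ne_of_lt hskg
      field_simp
    refine ⟨sk, hskS, ?_, ?_, ?_⟩
    · intro h; rw [h, hgsi] at hskg; exact lt_irrefl 0 hskg
    · intro h; rw [h, hgsj] at hskg; exact lt_irrefl 0 hskg
    · rw [hz, ← hρeq]
      exact (heq_iff t sk).mpr htight
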